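/- Let (g_n) be a sequence of non-negative random variables, c ≥ 0 a constant, and p ≥ 1. If E|g_n^q − c^q| → 0 for every q ∈ (0, p], then E(|g_n − c|^p) → 0. -/
import Mathlib


open MeasureTheory Filter

private lemma add_rpow_le' {x y p : ℝ} (hx : 0 ≤ x) (hy : 0 ≤ y) (hp : 1 ≤ p) :
    x ^ p + y ^ p ≤ (x + y) ^ p := by
  lift x to NNReal using hx
  lift y to NNReal using hy
  exact_mod_cast NNReal.add_rpow_le_rpow_add x y hp

private lemma rpow_add_le' {x y p : ℝ} (hx : 0 ≤ x) (hy : 0 ≤ y) (hp : 1 ≤ p) :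
    (x + y) ^ p ≤ 2 ^ (p - 1) * (x ^ p + y ^ p) := by
  lift x to NNReal using hx
  lift y to NNReal using hy
  exact_mod_cast NNReal.rpow_add_le_mul_rpow_add_rpow x y hp

private lemma key1 {a c p : ℝ} (ha : 0 ≤ a) (hc : 0 ≤ c) (hp : 1 ≤ p) :
    |a - c| ^ p ≤ |a ^ p - c ^ p| := by
  have hp0 : (0 : ℝ) ≤ p := le_trans zero_le_one hp
  rcases le_total c a with hca | hac
  · have h1 : c ^ p ≤ a ^ p := Real.rpow_le_rpow hc hca hp0
    have h2 := add_rpow_le' (sub_nonneg.2 hca) hc hp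
    rw [sub_add_cancel] at h2
    rw [abs_of_nonneg (sub_nonneg.2 hca), abs_of_nonneg (sub_nonneg.2 h1)]
    linarith
  · have h1 : a ^ p ≤ c ^ p := Real.rpow_le_rpow ha hac hp0
    have h2 := add_rpow_le' (sub_nonneg.2 hac) ha hp
    rw [sub_add_cancel] at h2
    rw [abs_of_nonpos (sub_nonpos.2 hac), abs_of_nonpos (sub_nonpos.2 h1), neg_sub, neg_sub]
    linarith

private lemma key2 {a c p : ℝ} (ha : 0 ≤ a) (hc : 0 ≤ c) (hp : 1 ≤ p) :
    |a ^ p - c ^ p| ≤ 2 ^ (p - 1) * (|a - c| ^ p + c ^ p) := by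
  have hp0 : (0 : ℝ) ≤ p := le_trans zero_le_one hp
  have h2 : (1 : ℝ) ≤ 2 ^ (p - 1) := Real.one_le_rpow one_le_two (by linarith)
  have habs : (0 : ℝ) ≤ |a - c| ^ p := Real.rpow_nonneg (abs_nonneg _) _
  have hcp : (0 : ℝ) ≤ c ^ p := Real.rpow_nonneg hc _
  rcases le_total c a with hca | hac
  · have h1 : c ^ p ≤ a ^ p := Real.rpow_le_rpow hc hca hp0
    rw [abs_of_nonneg (sub_nonneg.2 h1), abs_of_nonneg (sub_nonneg.2 hca)]
    have h3 := rpow_add_le' (sub_nonneg.2 hca) hc hp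
    rw [sub_add_cancel] at h3
    nlinarith
  · have h1 : a ^ p ≤ c ^ p := Real.rpow_le_rpow ha hac hp0
    rw [abs_of_nonpos (sub_nonpos.2 h1), neg_sub]
    have hap : (0 : ℝ) ≤ a ^ p := Real.rpow_nonneg ha _
    nlinarith

theorem stmt_0 {Ω : Type*} [MeasurableSpace Ω] (μ : Measure Ω) [IsProbabilityMeasure μ]
    (g : ℕ → Ω → ℝ) (hg_nonneg : ∀ n ω, 0 ≤ g n ω) (hg_meas : ∀ n, Measurable (g n))
    (c p : ℝ) (hc : 0 ≤ c) (hp : 1 ≤ p)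
    (h : ∀ q ∈ Set.Ioc (0 : ℝ) p,
      Tendsto (fun n => ∫ ω, |g n ω ^ q - c ^ q| ∂μ) atTop (nhds 0)) :
    Tendsto (fun n => ∫ ω, |g n ω - c| ^ p ∂μ) atTop (nhds 0) := by
  have hp0 : (0 : ℝ) < p := lt_of_lt_of_le one_pos hp
  have hq := h p ⟨hp0, le_refl p⟩
  refine squeeze_zero (fun n => integral_nonneg fun ω => Real.rpow_nonneg (abs_nonneg _) _)
    (fun n => ?_) hq
  by_cases hint : Integrable (fun ω => |g n ω ^ p - c ^ p|) μ
  · exact integral_mono_of_nonneg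
      (ae_of_all _ fun ω => Real.rpow_nonneg (abs_nonneg _) _) hint
      (ae_of_all _ fun ω => key1 (hg_nonneg n ω) hc hp)
  · have hnint : ¬ Integrable (fun ω => |g n ω - c| ^ p) μ := by
      intro hI
      apply hint
      have hmeas : AEStronglyMeasurable (fun ω => |g n ω ^ p - c ^ p|) μ :=
        ((((hg_meas n).pow_const p).sub measurable_const).abs).aestronglyMeasurable
      refine Integrable.mono' (((hI.add (integrable_const (c ^ p))).const_mul
        (2 ^ (p - 1)))) hmeas (ae_of_all _ fun ω => ?_)
      rw [Real.norm_eq_abs, abs_abs]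
      exact key2 (hg_nonneg n ω) hc hp
    rw [integral_undef hnint]
    exact integral_nonneg fun ω => abs_nonneg _
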